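/- (Weak duality for the probability SDP.) Let a, b ≥ 1, f ∈ ℝ, and let Q, R be Hermitian matrices on ℂ^a ⊗ ℂ^b. Suppose J is a positive semidefinite matrix on ℂ^a ⊗ ℂ^b with tr₂[J] ≤ I_a and tr[J·Q] = f·tr[J·R], and suppose x ∈ ℝ and Y is a Hermitian a×a matrix with Y ≤ 0 and (1 − x·f)·R + x·Q + Y⊗I_b ≤ 0 (in the Loewner order). Then tr[J·R] ≤ −tr[Y]. -/

import Mathlib

open Matrix Kronecker ComplexOrder

lemma trace_conjTranspose_mul_self_nonneg' {n m : Type*} [Fintype n] [Fintype m]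
    (M : Matrix m n ℂ) : 0 ≤ (Mᴴ * M).trace := by
  rw [Matrix.trace]
  refine Finset.sum_nonneg fun j _ => ?_
  simp only [Matrix.diag_apply, Matrix.mul_apply, Matrix.conjTranspose_apply]
  exact Finset.sum_nonneg fun i _ => star_mul_self_nonneg _

lemma trace_mul_nonneg' {n : Type*} [Fintype n] [DecidableEq n]
    {A B : Matrix n n ℂ} (hA : A.PosSemidef) (hB : B.PosSemidef) :
    0 ≤ (A * B).trace := by
  obtain ⟨C, rfl⟩ : ∃ C : Matrix n n ℂ, A = Cᴴ * C := by
    open scoped MatrixOrder in exact CStarAlgebra.nonneg_iff_eq_star_mul_self.mp hA.nonneg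
  obtain ⟨D, rfl⟩ : ∃ D : Matrix n n ℂ, B = Dᴴ * D := by
    open scoped MatrixOrder in exact CStarAlgebra.nonneg_iff_eq_star_mul_self.mp hB.nonneg
  have h : (Cᴴ * C * (Dᴴ * D)).trace = ((C * Dᴴ)ᴴ * (C * Dᴴ)).trace := by
    rw [Matrix.conjTranspose_mul, Matrix.conjTranspose_conjTranspose,
      ← Matrix.mul_assoc, Matrix.trace_mul_cycle (Cᴴ * C) Dᴴ D]
    simp [Matrix.mul_assoc]
  rw [h]
  exact trace_conjTranspose_mul_self_nonneg' _

/-- Partial trace over the second tensor factor `ℂ^b`. -/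
noncomputable def ptrB {a b : ℕ} (M : Matrix (Fin a × Fin b) (Fin a × Fin b) ℂ) :
    Matrix (Fin a) (Fin a) ℂ :=
  Matrix.of fun i j => ∑ k : Fin b, M (i, k) (j, k)

lemma trace_mul_kron_one' {a b : ℕ} (J : Matrix (Fin a × Fin b) (Fin a × Fin b) ℂ)
    (Y : Matrix (Fin a) (Fin a) ℂ) :
    (J * (Y ⊗ₖ (1 : Matrix (Fin b) (Fin b) ℂ))).trace = (ptrB J * Y).trace := by
  simp only [Matrix.trace, Matrix.diag_apply, Matrix.mul_apply, ptrB, Matrix.of_apply,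
    kroneckerMap_apply, Fintype.sum_prod_type, Matrix.one_apply, mul_ite, mul_one, mul_zero,
    Finset.sum_ite_eq, Finset.mem_univ, if_true, Finset.sum_mul]
  exact Finset.sum_congr rfl fun i _ => by
    rw [Finset.sum_comm]; exact Finset.sum_congr rfl fun k _ => by simp

/-- weak duality for the probability SDP. If `J ⪰ 0` with
`tr₂[J] ≤ I_a` and `tr[J·Q] = f·tr[J·R]`, and `(x, Y)` is dual feasible, i.e.
`Y ≤ 0` Hermitian and `(1 − x·f)·R + x·Q + Y⊗I_b ≤ 0`, then `tr[J·R] ≤ −tr[Y]`. -/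
theorem stmt18 (a b : ℕ) (ha : 1 ≤ a) (hb : 1 ≤ b) (f : ℝ)
    (Q R : Matrix (Fin a × Fin b) (Fin a × Fin b) ℂ)
    (hQ : Q.IsHermitian) (hR : R.IsHermitian)
    (J : Matrix (Fin a × Fin b) (Fin a × Fin b) ℂ) (hJ : J.PosSemidef)
    (hJtr : ((1 : Matrix (Fin a) (Fin a) ℂ) - ptrB J).PosSemidef)
    (hJQR : (J * Q).trace = (f : ℂ) * (J * R).trace)
    (x : ℝ) (Y : Matrix (Fin a) (Fin a) ℂ) (hY : Y.IsHermitian)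
    (hYneg : (-Y).PosSemidef)
    (hdual : (-(((1 - x * f : ℝ) : ℂ) • R + (x : ℂ) • Q
      + Y ⊗ₖ (1 : Matrix (Fin b) (Fin b) ℂ))).PosSemidef) :
    (J * R).trace ≤ -Y.trace := by
  have h1 : 0 ≤ (J * (-(((1 - x * f : ℝ) : ℂ) • R + (x : ℂ) • Q
      + Y ⊗ₖ (1 : Matrix (Fin b) (Fin b) ℂ)))).trace := trace_mul_nonneg' hJ hdual
  have hE : ((1 - x * f : ℝ) : ℂ) * (J * R).trace + (x : ℂ) * (J * Q).trace
      + (J * (Y ⊗ₖ (1 : Matrix (Fin b) (Fin b) ℂ))).trace ≤ 0 := by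
    have := h1
    rw [Matrix.mul_neg, Matrix.trace_neg, mul_add, mul_add, Matrix.trace_add, Matrix.trace_add,
      Matrix.mul_smul, Matrix.mul_smul, Matrix.trace_smul, Matrix.trace_smul] at this
    simpa [smul_eq_mul] using neg_nonneg.mp (by simpa using this)
  have hcoef : ((1 - x * f : ℝ) : ℂ) + (x : ℂ) * (f : ℂ) = 1 := by push_cast; ring
  have hA : (J * R).trace + (ptrB J * Y).trace ≤ 0 := by
    have heq : ((1 - x * f : ℝ) : ℂ) * (J * R).trace + (x : ℂ) * (J * Q).trace
        + (J * (Y ⊗ₖ (1 : Matrix (Fin b) (Fin b) ℂ))).trace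
        = (J * R).trace + (ptrB J * Y).trace := by
      rw [hJQR, trace_mul_kron_one']
      linear_combination (J * R).trace * hcoef
    rwa [heq] at hE
  have h2 : 0 ≤ (((1 : Matrix (Fin a) (Fin a) ℂ) - ptrB J) * (-Y)).trace :=
    trace_mul_nonneg' hJtr hYneg
  have hB : Y.trace ≤ (ptrB J * Y).trace := by
    rw [Matrix.sub_mul, Matrix.one_mul, Matrix.trace_sub, Matrix.mul_neg, Matrix.trace_neg,
      Matrix.trace_neg, sub_nonneg, neg_le_neg_iff] at h2
    exact h2
  have hstep : (J * R).trace ≤ -(ptrB J * Y).trace := by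
    have h := neg_nonneg.mpr hA
    rw [← sub_nonneg]
    convert h using 1
    ring
  exact hstep.trans (neg_le_neg hB)
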